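/- Let A_0, …, A_k ⊆ ℤ^n be full-dimensional configurations and B_0, …, B_r ⊆ ℤ^{n+k−r} nonempty configurations such that A_0 * … * A_k ≅ B_0 * … * B_r as configurations in ℤ^{n+k}. If in addition dim(B_i) < n for all i ∈ {0, …, r}, then dim(B_0) + … + dim(B_r) ≥ n − r + (r+1)·k. -/

import Mathlib

open scoped Pointwise

/-- The lattice `ℤ^n`. -/
abbrev ZLat (n : ℕ) := Fin n → ℤ

/-- Inclusion of `ℤ^n` into `ℝ^n`. -/
def toR {n : ℕ} (v : ZLat n) : Fin n → ℝ := fun i => (v i : ℝ)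

/-- The dimension of a configuration: the dimension of its affine hull in `ℝ^n`. -/
noncomputable def confDim {n : ℕ} (A : Finset (ZLat n)) : ℕ :=
  Module.finrank ℝ (affineSpan ℝ (toR '' (A : Set (ZLat n)))).direction

/-- `cayleyE k i` is `e_i ∈ ℤ^k`, where `e_0 = 0` and `e_1, …, e_k` are the
standard basis vectors. -/
def cayleyE (k : ℕ) (i : Fin (k + 1)) : ZLat k :=
  fun j => if (j : ℕ) + 1 = (i : ℕ) then 1 else 0

/-- The Cayley sum `A_0 * ⋯ * A_k ⊆ ℤ^{n+k}` of configurations `A_0, …, A_k ⊆ ℤ^n`. -/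
def cayley {n k : ℕ} (A : Fin (k + 1) → Finset (ZLat n)) : Finset (ZLat (n + k)) :=
  Finset.univ.biUnion fun i => (A i).image fun a => Fin.append a (cayleyE k i)

/-- The vertex set `Δ_k = {e_0, e_1, …, e_k} ⊆ ℤ^k` of the standard unimodular simplex. -/
def stdSimplexConfig (k : ℕ) : Finset (ZLat k) := Finset.univ.image (cayleyE k)

/-- The subgroup `⟨A - A⟩ ⊆ ℤ^n` generated by all differences of elements of `A`. -/
def diffSpan {n : ℕ} (A : Finset (ZLat n)) : AddSubgroup (ZLat n) :=
  AddSubgroup.closure {d | ∃ a ∈ A, ∃ b ∈ A, d = a - b}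

/-- A family `A_0, …, A_k ⊆ ℤ^n` is spanning if `⟨A_0-A_0⟩ + ⋯ + ⟨A_k-A_k⟩ = ℤ^n`. -/
def IsSpanningFamily {n k : ℕ} (A : Fin (k + 1) → Finset (ZLat n)) : Prop :=
  (⨆ i, diffSpan (A i)) = ⊤

/-- The Cayley sum of `A_0, …, A_k` is of join type if the natural homomorphism
`⟨A_0-A_0⟩ ⊕ ⋯ ⊕ ⟨A_k-A_k⟩ → ℤ^n`, `(a_0, …, a_k) ↦ a_0 + ⋯ + a_k`, is injective. -/
def JoinType {n k : ℕ} (A : Fin (k + 1) → Finset (ZLat n)) : Prop :=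
  ∀ d : Fin (k + 1) → ZLat n, (∀ i, d i ∈ diffSpan (A i)) → ∑ i, d i = 0 → ∀ i, d i = 0

/-- The lattice points of the affine hull of `A`, i.e. `aff(A) ∩ ℤ^n`. -/
def affLat {n : ℕ} (A : Finset (ZLat n)) : Set (ZLat n) :=
  {x | toR x ∈ affineSpan ℝ (toR '' (A : Set (ZLat n)))}

/-- Two configurations `A ⊆ ℤ^n`, `B ⊆ ℤ^m` are isomorphic if there is an affine
lattice isomorphism `aff(A) ∩ ℤ^n → aff(B) ∩ ℤ^m` mapping `A` onto `B`. -/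
def ConfigIso {n m : ℕ} (A : Finset (ZLat n)) (B : Finset (ZLat m)) : Prop :=
  ∃ f : ZLat n → ZLat m, ∃ g : ZLat m → ZLat n,
    (∀ x ∈ affLat A, f x ∈ affLat B) ∧
    (∀ y ∈ affLat B, g y ∈ affLat A) ∧
    (∀ x ∈ affLat A, g (f x) = x) ∧
    (∀ y ∈ affLat B, f (g y) = y) ∧
    (∀ x y z, x ∈ affLat A → y ∈ affLat A → z ∈ affLat A →
      f (x + y - z) = f x + f y - f z) ∧
    f '' (A : Set (ZLat n)) = (B : Set (ZLat m))

/-- `F` is a face of the configuration `A`: the intersection of a face of the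
polytope `conv(A)` with `A` (the empty face and `A` itself are allowed). -/
def IsFaceOf {n : ℕ} (F A : Finset (ZLat n)) : Prop :=
  F = ∅ ∨ (F ⊆ A ∧ ∃ l : (Fin n → ℝ) →ₗ[ℝ] ℝ,
    (F : Set (ZLat n)) = {x ∈ (A : Set (ZLat n)) | ∀ y ∈ A, l (toR y) ≤ l (toR x)})

/-- Faces `F_0, …, F_k` of `A` covering `A` form a Cayley decomposition of `A` if
there is a lattice projection `π : ℤ^n → ℤ^k` with `π(F_i) ⊆ {e_i}` for all `i`. -/
def IsCayleyDecomp {n k : ℕ} (A : Finset (ZLat n)) (F : Fin (k + 1) → Finset (ZLat n)) : Prop :=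
  (∀ i, IsFaceOf (F i) A) ∧ (∀ a ∈ A, ∃ i, a ∈ F i) ∧
    ∃ π : ZLat n →+ ZLat k, Function.Surjective π ∧ ∀ i, ∀ x ∈ F i, π x = cayleyE k i

/-- `conv(A)` contains an interior lattice point. -/
def HasIntLatPt {n : ℕ} (A : Finset (ZLat n)) : Prop :=
  ∃ x : ZLat n, toR x ∈ interior (convexHull ℝ (toR '' (A : Set (ZLat n))))

/-- The dilate `c · conv(A)` contains an interior lattice point. -/
def HasIntLatPtDilate {n : ℕ} (c : ℕ) (A : Finset (ZLat n)) : Prop :=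
  ∃ x : ZLat n, toR x ∈ interior ((c : ℝ) • convexHull ℝ (toR '' (A : Set (ZLat n))))

/-- The codegree of the lattice polytope `conv(A)`: the smallest `c ≥ 1` such that
`c · conv(A)` has an interior lattice point. -/
noncomputable def codeg {n : ℕ} (A : Finset (ZLat n)) : ℕ :=
  sInf {c : ℕ | 1 ≤ c ∧ HasIntLatPtDilate c A}

namespace CayAux

open Module Submodule

lemma toR_sub {N : ℕ} (x y : ZLat N) : toR (x - y) = toR x - toR y := by
  funext t; simp [toR]

lemma toR_zero {N : ℕ} : toR (0 : ZLat N) = 0 := by funext t; simp [toR]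

/-- difference set of a configuration -/
def dset {N : ℕ} (C : Finset (ZLat N)) : Set (Fin N → ℝ) :=
  {v | ∃ x ∈ C, ∃ y ∈ C, v = toR x - toR y}

lemma dset_mono {N : ℕ} {C D : Finset (ZLat N)} (h : C ⊆ D) : dset C ⊆ dset D := by
  rintro v ⟨x, hx, y, hy, rfl⟩
  exact ⟨x, h hx, y, h hy, rfl⟩

lemma vectorSpan_eq_span_dset {N : ℕ} (C : Finset (ZLat N)) :
    vectorSpan ℝ (toR '' (C : Set (ZLat N))) = Submodule.span ℝ (dset C) := by
  rw [vectorSpan_def]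
  congr 1
  ext v
  constructor
  · rintro ⟨p, ⟨x, hx, rfl⟩, q, ⟨y, hy, rfl⟩, rfl⟩
    exact ⟨x, hx, y, hy, (vsub_eq_sub _ _).symm⟩
  · rintro ⟨x, hx, y, hy, rfl⟩
    exact ⟨toR x, ⟨x, hx, rfl⟩, toR y, ⟨y, hy, rfl⟩, vsub_eq_sub _ _⟩

lemma confDim_eq {N : ℕ} (C : Finset (ZLat N)) :
    confDim C = Module.finrank ℝ (Submodule.span ℝ (dset C)) := by
  rw [confDim, direction_affineSpan, vectorSpan_eq_span_dset]

section Realify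

variable {N M : ℕ}

/-- the translated map `x ↦ F x - F 0` as an additive hom, for `F` affine. -/
def ahom (F : ZLat N → ZLat M)
    (hF : ∀ x y z, F (x + y - z) = F x + F y - F z) : ZLat N →+ ZLat M :=
  AddMonoidHom.mk' (fun x => F x - F 0) (by
    intro x y
    have h := hF x y 0
    rw [sub_zero] at h
    show F (x + y) - F 0 = (F x - F 0) + (F y - F 0)
    rw [h]
    abel)

lemma ahom_eq_sum (ψ : ZLat N →+ ZLat M) (x : ZLat N) :
    ψ x = ∑ s, x s • ψ (Pi.single s 1) := by
  have hx : x = ∑ s, x s • (Pi.single s 1 : ZLat N) := by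
    conv_lhs => rw [← Finset.univ_sum_single x]
    congr 1; funext s
    rw [← Pi.single_smul, smul_eq_mul, mul_one]
  conv_lhs => rw [hx]
  rw [map_sum]
  congr 1; funext s
  rw [map_zsmul]

/-- real-linear extension of the linearization of `F` -/
noncomputable def realify (F : ZLat N → ZLat M) : (Fin N → ℝ) →ₗ[ℝ] (Fin M → ℝ) where
  toFun v := fun t => ∑ s, v s * ((F (Pi.single s 1) t : ℝ) - (F 0 t : ℝ))
  map_add' v w := by funext t; simp [add_mul, Finset.sum_add_distrib]
  map_smul' c v := by
    funext t
    simp [Finset.mul_sum, mul_assoc]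

lemma realify_toR (F : ZLat N → ZLat M)
    (hF : ∀ x y z, F (x + y - z) = F x + F y - F z) (x : ZLat N) :
    realify F (toR x) = toR (F x) - toR (F 0) := by
  have h := ahom_eq_sum (ahom F hF) x
  funext t
  have ht := congrFun h t
  simp only [ahom, AddMonoidHom.mk'_apply, Finset.sum_apply, Pi.smul_apply, Pi.sub_apply,
    smul_eq_mul] at ht
  have : ((F x t - F 0 t : ℤ) : ℝ) = ((∑ s, x s * (F (Pi.single s 1) t - F 0 t) : ℤ) : ℝ) := by
    exact_mod_cast congrArg (fun z : ℤ => (z : ℝ)) ht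
  push_cast at this
  simpa [realify, toR] using this.symm

lemma realify_diff (F : ZLat N → ZLat M)
    (hF : ∀ x y z, F (x + y - z) = F x + F y - F z) (x y : ZLat N) :
    realify F (toR x - toR y) = toR (F x) - toR (F y) := by
  rw [map_sub, realify_toR F hF, realify_toR F hF]
  abel

lemma realify_injective (h : N = M) (F : ZLat N → ZLat M)
    (hF : ∀ x y z, F (x + y - z) = F x + F y - F z)
    (hinj : Function.Injective F) : Function.Injective (realify F) := by
  classical
  subst h
  set ψ := ahom F hF with hψ
  have hψinj : Function.Injective ψ := by
    intro x y hxy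
    have : F x - F 0 = F y - F 0 := hxy
    exact hinj (by linear_combination (norm := abel) this)
  set Mat : Matrix (Fin N) (Fin N) ℤ := fun t s => ψ (Pi.single s 1) t with hMat
  have hmul : ∀ v : ZLat N, Mat.mulVec v = ψ v := by
    intro v
    funext t
    rw [ahom_eq_sum ψ v]
    simp [Matrix.mulVec, Mat, dotProduct, mul_comm]
  have hdet : Mat.det ≠ 0 := by
    intro h0
    obtain ⟨v, hv, hv0⟩ := (Matrix.exists_mulVec_eq_zero_iff).2 h0
    apply hv
    apply hψinj
    rw [← hmul, hv0, map_zero]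
  have hdetR : (Mat.map (Int.cast : ℤ → ℝ)).det ≠ 0 := by
    have : (Mat.map (Int.cast : ℤ → ℝ)).det = ((Mat.det : ℤ) : ℝ) := by
      have := RingHom.map_det (Int.castRingHom ℝ) Mat
      simpa [RingHom.mapMatrix_apply] using this.symm
    rw [this]
    exact_mod_cast hdet
  have hmulR : ∀ v : Fin N → ℝ, (Mat.map (Int.cast : ℤ → ℝ)).mulVec v = realify F v := by
    intro v
    funext t
    simp [Matrix.mulVec, dotProduct, Mat, realify, ψ, ahom, mul_comm]
    refine Finset.sum_congr rfl (fun s _ => ?_)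
    change v s * ((F (Pi.single s 1) t - F 0 t : ℤ) : ℝ) = _
    push_cast
    ring
  intro v w hvw
  by_contra hne
  have h0 : (Mat.map (Int.cast : ℤ → ℝ)).mulVec (v - w) = 0 := by
    rw [hmulR, map_sub, hvw, sub_self]
  have := Matrix.exists_mulVec_eq_zero_iff.1 ⟨v - w, sub_ne_zero.2 hne, h0⟩
  exact hdetR this

end Realify

section Append

variable {m k : ℕ}

lemma toR_append (a : ZLat m) (b : ZLat k) :
    toR (Fin.append a b) = Fin.append (toR a) (toR b) := by
  funext t
  refine Fin.addCases (fun i => ?_) (fun i => ?_) t <;>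
    simp [toR, Fin.append_left, Fin.append_right]

/-- appending zeros, as a linear map -/
noncomputable def apdL (m k : ℕ) : (Fin m → ℝ) →ₗ[ℝ] (Fin (m + k) → ℝ) where
  toFun v := Fin.append v 0
  map_add' v w := by
    funext t
    refine Fin.addCases (fun i => ?_) (fun i => ?_) t <;>
      simp [Fin.append_left, Fin.append_right]
  map_smul' c v := by
    funext t
    refine Fin.addCases (fun i => ?_) (fun i => ?_) t <;>
      simp [Fin.append_left, Fin.append_right]

lemma apdL_injective : Function.Injective (apdL m k) := by
  intro v w h
  funext i
  have := congrFun h (Fin.castAdd k i)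
  simpa [apdL, Fin.append_left] using this

lemma append_toR_sub (a b : ZLat m) (c : ZLat k) :
    toR (Fin.append a c) - toR (Fin.append b c) = apdL m k (toR a - toR b) := by
  funext t
  refine Fin.addCases (fun i => ?_) (fun i => ?_) t <;>
    simp [toR, apdL, Fin.append_left, Fin.append_right]

lemma dset_image_append (C : Finset (ZLat m)) (c : ZLat k) :
    dset (C.image fun a => Fin.append a c) = (apdL m k) '' (dset C) := by
  ext v
  constructor
  · rintro ⟨x, hx, y, hy, rfl⟩
    rw [Finset.mem_image] at hx hy
    obtain ⟨a, ha, rfl⟩ := hx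
    obtain ⟨b, hb, rfl⟩ := hy
    exact ⟨toR a - toR b, ⟨a, ha, b, hb, rfl⟩, (append_toR_sub a b c).symm⟩
  · rintro ⟨w, ⟨a, ha, b, hb, rfl⟩, rfl⟩
    exact ⟨Fin.append a c, Finset.mem_image_of_mem _ ha,
      Fin.append b c, Finset.mem_image_of_mem _ hb, (append_toR_sub a b c).symm⟩

lemma finrank_span_dset_image_append (C : Finset (ZLat m)) (c : ZLat k) :
    Module.finrank ℝ (Submodule.span ℝ (dset (C.image fun a => Fin.append a c)))
      = confDim C := by
  rw [confDim_eq, dset_image_append, ← Submodule.map_span]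
  exact (LinearEquiv.finrank_eq
    (Submodule.equivMapOfInjective _ apdL_injective _)).symm

end Append

section RankTools

variable {V : Type*} [AddCommGroup V] [Module ℝ V] [FiniteDimensional ℝ V]

lemma finrank_sup_le (p q : Submodule ℝ V) :
    Module.finrank ℝ (p ⊔ q : Submodule ℝ V)
      ≤ Module.finrank ℝ p + Module.finrank ℝ q := by
  have h := Submodule.finrank_sup_add_finrank_inf_eq p q
  omega

lemma finrank_iSup_fin_le (m : ℕ) (T : Fin m → Submodule ℝ V) :
    Module.finrank ℝ (⨆ j, T j : Submodule ℝ V) ≤ ∑ j, Module.finrank ℝ (T j) := by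
  induction m with
  | zero => simp [iSup_of_empty]
  | succ m ih =>
    have hsup : (⨆ j, T j) = T 0 ⊔ ⨆ j : Fin m, T j.succ := by
      apply le_antisymm
      · apply iSup_le
        intro j
        rcases Fin.eq_zero_or_eq_succ j with rfl | ⟨t, rfl⟩
        · exact le_sup_left
        · exact le_trans (le_iSup (fun j : Fin m => T j.succ) t) le_sup_right
      · refine sup_le (le_iSup T 0) (iSup_le fun t => le_iSup T t.succ)
    rw [hsup, Fin.sum_univ_succ]
    exact le_trans (finrank_sup_le _ _) (by
      have := ih (fun j : Fin m => T j.succ)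
      omega)

lemma finrank_eq_inf_add_map {W : Type*} [AddCommGroup W] [Module ℝ W]
    (P : V →ₗ[ℝ] W) (p : Submodule ℝ V) :
    Module.finrank ℝ p
      = Module.finrank ℝ (p ⊓ LinearMap.ker P : Submodule ℝ V)
        + Module.finrank ℝ (Submodule.map P p) := by
  have h := LinearMap.finrank_range_add_finrank_ker (P.domRestrict p)
  rw [LinearMap.range_domRestrict, LinearMap.ker_domRestrict] at h
  have h2 := LinearEquiv.finrank_eq (Submodule.equivMapOfInjective p.subtype
    (Submodule.injective_subtype p) (Submodule.comap p.subtype (LinearMap.ker P)))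
  rw [Submodule.map_comap_subtype] at h2
  omega

end RankTools

section CayleyE

lemma cayleyE_zero (k : ℕ) : cayleyE k 0 = 0 := by
  funext t; simp [cayleyE]

lemma toR_cayleyE_succ {k : ℕ} (t : Fin k) :
    toR (cayleyE k t.succ) = Pi.single t 1 := by
  funext s
  simp only [toR, cayleyE, Fin.val_succ, Pi.single_apply]
  by_cases h : s = t
  · subst h; simp
  · rw [if_neg (by simpa [Fin.ext_iff] using h), if_neg h]
    simp

lemma cayleyE_injective (k : ℕ) : Function.Injective (cayleyE k) := by
  intro j j' h
  by_contra hne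
  have hv : (j : ℕ) ≠ (j' : ℕ) := fun hh => hne (Fin.ext hh)
  rcases Nat.lt_or_ge (j : ℕ) (j' : ℕ) with hlt | hge
  · have h1 : 1 ≤ (j' : ℕ) := by omega
    have hlt' : (j' : ℕ) - 1 < k := by have := j'.isLt; omega
    have := congrFun h ⟨(j' : ℕ) - 1, hlt'⟩
    simp only [cayleyE] at this
    rw [if_neg (by omega), if_pos (by omega)] at this
    exact absurd this (by norm_num)
  · have hlt2 : (j' : ℕ) < (j : ℕ) := by omega
    have h1 : 1 ≤ (j : ℕ) := by omega
    have hlt' : (j : ℕ) - 1 < k := by have := j.isLt; omega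
    have := congrFun h ⟨(j : ℕ) - 1, hlt'⟩
    simp only [cayleyE] at this
    rw [if_pos (by omega), if_neg (by omega)] at this
    exact absurd this (by norm_num)

lemma sum_smul_single {k : ℕ} (c : Fin k → ℝ) :
    ∑ t, c t • (Pi.single t 1 : Fin k → ℝ) = c := by
  conv_rhs => rw [← Finset.univ_sum_single c]
  congr 1; funext t
  rw [← Pi.single_smul, smul_eq_mul, mul_one]

lemma sum_toR_cayleyE {r : ℕ} (j : Fin (r + 1)) (hj : j ≠ 0) :
    ∑ t : Fin r, toR (cayleyE r j) t = 1 := by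
  have hj1 : 1 ≤ (j : ℕ) := by
    rcases Nat.eq_zero_or_pos (j : ℕ) with h | h
    · exact absurd (Fin.ext h) hj
    · omega
  have hlt : (j : ℕ) - 1 < r := by have := j.isLt; omega
  rw [Finset.sum_eq_single (⟨(j : ℕ) - 1, hlt⟩ : Fin r)]
  · simp only [toR, cayleyE]
    rw [if_pos (by show (j : ℕ) - 1 + 1 = (j : ℕ); omega)]
    norm_num
  · intro t _ ht
    simp only [toR, cayleyE]
    rw [if_neg (by
      intro hc
      apply ht
      apply Fin.ext
      show (t : ℕ) = (j : ℕ) - 1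
      omega)]
    norm_num
  · intro h
    exact absurd (Finset.mem_univ _) h

end CayleyE

end CayAux
/-- If `A_0, …, A_k ⊆ ℤ^n` are full-dimensional configurations,
`B_0, …, B_r ⊆ ℤ^{n+k-r}` are nonempty configurations with
`A_0 * ⋯ * A_k ≅ B_0 * ⋯ * B_r` in `ℤ^{n+k}`, and `dim(B_i) < n` for all `i`,
then `dim(B_0) + ⋯ + dim(B_r) ≥ n - r + (r+1)·k`. -/
theorem cayley_summand_dim_sum_ge {n k r : ℕ} (hr : r ≤ n + k)
    (A : Fin (k + 1) → Finset (ZLat n)) (hfull : ∀ i, confDim (A i) = n)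
    (B : Fin (r + 1) → Finset (ZLat (n + k - r))) (hB : ∀ i, (B i).Nonempty)
    (hiso : ConfigIso (cayley A) (cayley B))
    (hlt : ∀ i, confDim (B i) < n) :
    (n : ℤ) - r + (r + 1) * k ≤ ∑ i, (confDim (B i) : ℤ) := by
  classical
  rcases Nat.eq_zero_or_pos n with rfl | hn
  · exact absurd (hlt 0) (by omega)
  obtain ⟨f, g, hfB, hgA, hgf, hfg, haffF, hfim⟩ := hiso
  -- A_i are nonempty
  have hAne : ∀ i, (A i).Nonempty := by
    intro i
    rw [Finset.nonempty_iff_ne_empty]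
    intro h
    have hi := hfull i
    rw [h, CayAux.confDim_eq] at hi
    have hd : CayAux.dset (∅ : Finset (ZLat n)) = ∅ := by
      ext v; simp [CayAux.dset]
    rw [hd, Submodule.span_empty, finrank_bot] at hi
    omega
  -- the A-configurations span everything
  have hspanA : ∀ i, Submodule.span ℝ (CayAux.dset (A i)) = ⊤ := by
    intro i
    apply Submodule.eq_top_of_finrank_eq
    rw [← CayAux.confDim_eq, hfull i, Module.finrank_fintype_fun_eq_card, Fintype.card_fin]
  -- projection to the last k coordinates
  set PA : (Fin (n + k) → ℝ) →ₗ[ℝ] (Fin k → ℝ) :=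
    LinearMap.funLeft ℝ ℝ (Fin.natAdd n) with hPA
  have hPAappend : ∀ (a : ZLat n) (c : ZLat k), PA (toR (Fin.append a c)) = toR c := by
    intro a c; funext t
    simp [hPA, LinearMap.funLeft_apply, toR, Fin.append_right]
  have hPAsurj : Function.Surjective PA := by
    intro w
    refine ⟨Fin.append 0 w, ?_⟩
    funext t
    simp [hPA, LinearMap.funLeft_apply, Fin.append_right]
  set KA := LinearMap.ker PA with hKA
  have hKArank : Module.finrank ℝ KA = n := by
    have h := LinearMap.finrank_range_add_finrank_ker PA
    rw [LinearMap.range_eq_top.mpr hPAsurj, finrank_top,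
      Module.finrank_fintype_fun_eq_card, Module.finrank_fintype_fun_eq_card,
      Fintype.card_fin, Fintype.card_fin] at h
    rw [hKA]
    omega
  -- slices
  set SL : Fin (k + 1) → Finset (ZLat (n + k)) :=
    fun i => (A i).image (fun a => Fin.append a (cayleyE k i)) with hSL
  have hSLsub : ∀ i, SL i ⊆ cayley A := by
    intro i x hx
    simp only [cayley, Finset.mem_biUnion]
    exact ⟨i, Finset.mem_univ i, hx⟩
  have hmemSL : ∀ {i : Fin (k+1)} {x}, x ∈ SL i ↔ ∃ a ∈ A i, x = Fin.append a (cayleyE k i) := by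
    intro i x
    simp only [hSL, Finset.mem_image]
    constructor
    · rintro ⟨a, ha, rfl⟩; exact ⟨a, ha, rfl⟩
    · rintro ⟨a, ha, rfl⟩; exact ⟨a, ha, rfl⟩
  have hmemC : ∀ {x}, x ∈ cayley A ↔ ∃ i, x ∈ SL i := by
    intro x
    simp only [cayley, Finset.mem_biUnion, Finset.mem_univ, true_and, hSL]
  have hUA : ∀ i, Submodule.span ℝ (CayAux.dset (SL i)) = KA := by
    intro i
    have hle : Submodule.span ℝ (CayAux.dset (SL i)) ≤ KA := by
      rw [Submodule.span_le]
      rintro v ⟨x, hx, y, hy, rfl⟩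
      rw [hmemSL] at hx hy
      obtain ⟨a, ha, rfl⟩ := hx
      obtain ⟨b, hb, rfl⟩ := hy
      simp only [SetLike.mem_coe, hKA, LinearMap.mem_ker, map_sub, hPAappend, sub_self]
    refine (Submodule.eq_of_le_of_finrank_le hle ?_)
    rw [hKArank, hSL]
    rw [CayAux.finrank_span_dset_image_append (A i) (cayleyE k i), hfull i]
  -- base points
  have hbase : ∀ i, Fin.append ((hAne i).choose) (cayleyE k i) ∈ SL i :=
    fun i => Finset.mem_image_of_mem _ (hAne i).choose_spec
  set bp : Fin (k + 1) → ZLat (n + k) :=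
    fun i => Fin.append ((hAne i).choose) (cayleyE k i) with hbp
  have hMtop : Submodule.span ℝ (CayAux.dset (cayley A)) = ⊤ := by
    rw [eq_top_iff]
    intro v _
    have hKM : KA ≤ Submodule.span ℝ (CayAux.dset (cayley A)) := by
      rw [← hUA 0]
      exact Submodule.span_mono (CayAux.dset_mono (hSLsub 0))
    have hw : ∀ i : Fin (k + 1),
        toR (bp i) - toR (bp 0) ∈ Submodule.span ℝ (CayAux.dset (cayley A)) :=
      fun i => Submodule.subset_span ⟨bp i, hSLsub i (hbase i), bp 0, hSLsub 0 (hbase 0), rfl⟩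
    have hu : (∑ t : Fin k, (PA v t) • (toR (bp t.succ) - toR (bp 0)))
        ∈ Submodule.span ℝ (CayAux.dset (cayley A)) :=
      Submodule.sum_mem _ (fun t _ => Submodule.smul_mem _ _ (hw t.succ))
    have hPAu : PA (∑ t : Fin k, (PA v t) • (toR (bp t.succ) - toR (bp 0))) = PA v := by
      rw [map_sum]
      have hterm : ∀ t : Fin k,
          PA ((PA v t) • (toR (bp t.succ) - toR (bp 0)))
            = (PA v t) • (Pi.single t 1 : Fin k → ℝ) := by
        intro t
        rw [map_smul, map_sub]
        simp only [hbp, hPAappend]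
        rw [CayAux.toR_cayleyE_succ, CayAux.cayleyE_zero, CayAux.toR_zero, sub_zero]
      rw [Finset.sum_congr rfl (fun t _ => hterm t)]
      exact CayAux.sum_smul_single (PA v)
    have hker : v - (∑ t : Fin k, (PA v t) • (toR (bp t.succ) - toR (bp 0))) ∈ KA := by
      rw [hKA, LinearMap.mem_ker, map_sub, hPAu, sub_self]
    have := Submodule.add_mem _ (hKM hker) hu
    simpa using this
  have hCne : (toR '' ((cayley A : Finset (ZLat (n + k))) : Set (ZLat (n + k)))).Nonempty :=
    ⟨toR (bp 0), Set.mem_image_of_mem _ (hSLsub 0 (hbase 0))⟩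
  have htopA : affineSpan ℝ (toR '' ((cayley A : Finset (ZLat (n + k))) : Set (ZLat (n + k)))) = ⊤ := by
    rw [AffineSubspace.affineSpan_eq_top_iff_vectorSpan_eq_top_of_nonempty ℝ _ _ hCne,
      CayAux.vectorSpan_eq_span_dset]
    exact hMtop
  have hAL : ∀ x : ZLat (n + k), x ∈ affLat (cayley A) := by
    intro x
    simp only [affLat, Set.mem_setOf_eq, htopA]
    exact AffineSubspace.mem_top _ _ _
  -- consequences of the isomorphism
  have hgfx : ∀ x, g (f x) = x := fun x => hgf x (hAL x)
  have haff : ∀ x y z, f (x + y - z) = f x + f y - f z :=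
    fun x y z => haffF x y z (hAL x) (hAL y) (hAL z)
  have hfinj : Function.Injective f := fun x y h => by rw [← hgfx x, h, hgfx]
  have hfmem : ∀ x ∈ cayley A, f x ∈ cayley B := by
    intro x hx
    have h1 : f x ∈ f '' ((cayley A : Finset _) : Set (ZLat (n + k))) :=
      Set.mem_image_of_mem f hx
    rw [hfim] at h1
    exact h1
  have hgmem : ∀ y ∈ cayley B, g y ∈ cayley A ∧ f (g y) = y := by
    intro y hy
    have hy' : y ∈ ((cayley B : Finset _) : Set (ZLat (n + k - r + r))) := hy
    rw [← hfim] at hy'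
    obtain ⟨x, hx, rfl⟩ := hy'
    rw [hgfx]
    exact ⟨hx, rfl⟩
  -- the pulled-back Cayley projection for B
  set φ : ZLat (n + k) → ZLat r :=
    fun x => fun t => f x (Fin.natAdd (n + k - r) t) with hφ
  have hφaff : ∀ x y z, φ (x + y - z) = φ x + φ y - φ z := by
    intro x y z; funext t; simp [hφ, haff x y z]
  have hφmem : ∀ x ∈ cayley A, ∃ j, ∃ b ∈ B j,
      f x = Fin.append b (cayleyE r j) ∧ φ x = cayleyE r j := by
    intro x hx
    have hy := hfmem x hx
    simp only [cayley, Finset.mem_biUnion, Finset.mem_univ, true_and,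
      Finset.mem_image] at hy
    obtain ⟨j, b, hb, hbx⟩ := hy
    refine ⟨j, b, hb, hbx.symm, ?_⟩
    funext t
    simp [hφ, ← hbx, Fin.append_right]
  -- real linearizations
  have hQd : ∀ x y, CayAux.realify φ (toR x - toR y) = toR (φ x) - toR (φ y) :=
    fun x y => CayAux.realify_diff φ hφaff x y
  have hTd : ∀ x y, CayAux.realify f (toR x - toR y) = toR (f x) - toR (f y) :=
    fun x y => CayAux.realify_diff f haff x y
  have hTfinj : Function.Injective (CayAux.realify f) :=
    CayAux.realify_injective (by omega) f haff hfinj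
  -- cells and fibers
  set Fc : Fin (r + 1) → Fin (k + 1) → Finset (ZLat n) :=
    fun j i => (A i).filter (fun a => φ (Fin.append a (cayleyE k i)) = cayleyE r j) with hFc
  set Gj : Fin (r + 1) → Finset (ZLat (n + k)) :=
    fun j => (cayley A).filter (fun x => φ x = cayleyE r j) with hGj
  have hcell : ∀ i, ∀ a ∈ A i, ∃ j, a ∈ Fc j i := by
    intro i a ha
    obtain ⟨j, b, hb, hfx, hφx⟩ := hφmem _ (hSLsub i (Finset.mem_image_of_mem _ ha))
    exact ⟨j, Finset.mem_filter.2 ⟨ha, hφx⟩⟩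
  have hFcG : ∀ j i a, a ∈ Fc j i → Fin.append a (cayleyE k i) ∈ Gj j := by
    intro j i a ha
    rw [hFc, Finset.mem_filter] at ha
    rw [hGj, Finset.mem_filter]
    exact ⟨hSLsub i (Finset.mem_image_of_mem _ ha.1), ha.2⟩
  set SLB : Fin (r + 1) → Finset (ZLat (n + k - r + r)) :=
    fun j => (B j).image (fun b => Fin.append b (cayleyE r j)) with hSLB
  have hSLBsub : ∀ j, SLB j ⊆ cayley B := by
    intro j x hx
    simp only [cayley, Finset.mem_biUnion]
    exact ⟨j, Finset.mem_univ _, hx⟩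
  set WJ : Fin (r + 1) → Submodule ℝ (Fin (n + k) → ℝ) :=
    fun j => Submodule.span ℝ (CayAux.dset (Gj j)) with hWJ
  have hmapWJ : ∀ j, Submodule.map (CayAux.realify f) (WJ j)
      = Submodule.span ℝ (CayAux.dset (SLB j)) := by
    intro j
    rw [hWJ, Submodule.map_span]
    congr 1
    ext v
    constructor
    · rintro ⟨w, ⟨x, hx, y, hy, rfl⟩, rfl⟩
      rw [hGj, Finset.mem_filter] at hx hy
      obtain ⟨j₁, b₁, hb₁, hfx, hφx⟩ := hφmem x hx.1
      obtain ⟨j₂, b₂, hb₂, hfy, hφy⟩ := hφmem y hy.1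
      have e₁ : j₁ = j := CayAux.cayleyE_injective r (by rw [← hφx, hx.2])
      have e₂ : j₂ = j := CayAux.cayleyE_injective r (by rw [← hφy, hy.2])
      subst e₁; subst e₂
      rw [hTd x y, hfx, hfy]
      exact ⟨_, Finset.mem_image_of_mem _ hb₁, _, Finset.mem_image_of_mem _ hb₂, rfl⟩
    · rintro ⟨p, hp, q, hq, rfl⟩
      obtain ⟨hpA, hpf⟩ := hgmem p (hSLBsub j hp)
      obtain ⟨hqA, hqf⟩ := hgmem q (hSLBsub j hq)
      have hpG : g p ∈ Gj j := by
        rw [hGj, Finset.mem_filter]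
        refine ⟨hpA, ?_⟩
        rw [hSLB, Finset.mem_image] at hp
        obtain ⟨b, hb, rfl⟩ := hp
        funext t
        simp [hφ, hpf, Fin.append_right]
      have hqG : g q ∈ Gj j := by
        rw [hGj, Finset.mem_filter]
        refine ⟨hqA, ?_⟩
        rw [hSLB, Finset.mem_image] at hq
        obtain ⟨b, hb, rfl⟩ := hq
        funext t
        simp [hφ, hqf, Fin.append_right]
      exact ⟨toR (g p) - toR (g q), ⟨g p, hpG, g q, hqG, rfl⟩,
        by rw [hTd, hpf, hqf]⟩
  have hWJrank : ∀ j, Module.finrank ℝ (WJ j) = confDim (B j) := by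
    intro j
    have h1 := LinearEquiv.finrank_eq
      (Submodule.equivMapOfInjective (CayAux.realify f) hTfinj (WJ j))
    rw [hmapWJ j] at h1
    rw [h1, hSLB, CayAux.finrank_span_dset_image_append]
  -- every fiber G_j is nonempty in some slice
  have hrow : ∀ j, ∃ i, ∃ a, a ∈ Fc j i := by
    intro j
    obtain ⟨b, hb⟩ := hB j
    have hy : Fin.append b (cayleyE r j) ∈ cayley B :=
      hSLBsub j (Finset.mem_image_of_mem _ hb)
    obtain ⟨hgC, hfgy⟩ := hgmem _ hy
    rw [hmemC] at hgC
    obtain ⟨i, hi⟩ := hgC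
    rw [hmemSL] at hi
    obtain ⟨a, ha, hax⟩ := hi
    refine ⟨i, a, Finset.mem_filter.2 ⟨ha, ?_⟩⟩
    rw [← hax]
    funext t
    simp [hφ, hfgy, Fin.append_right]
  -- no slice is contained in a single fiber
  have hnotall : ∀ i j, ¬ (∀ a ∈ A i, a ∈ Fc j i) := by
    intro i j hall
    have hsub : SL i ⊆ Gj j := by
      intro x hx
      rw [hmemSL] at hx
      obtain ⟨a, ha, rfl⟩ := hx
      exact hFcG j i a (hall a ha)
    have hle : KA ≤ WJ j := by
      rw [← hUA i]
      exact Submodule.span_mono (CayAux.dset_mono hsub)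
    have hfr : n ≤ Module.finrank ℝ (WJ j) := by
      have h := Submodule.finrank_mono hle
      rwa [hKArank] at h
    rw [hWJrank j] at hfr
    exact absurd (hlt j) (by omega)
  -- all cells are nonempty
  have hcells : ∀ j i, ∃ a, a ∈ Fc j i := by
    intro j₀ i₀
    by_contra hne
    push_neg at hne
    obtain ⟨i₁, a₁, ha₁⟩ := hrow j₀
    obtain ⟨a₂, ha₂A, ha₂⟩ : ∃ a, a ∈ A i₁ ∧ a ∉ Fc j₀ i₁ := by
      by_contra h
      push_neg at h
      exact hnotall i₁ j₀ h
    obtain ⟨j₁, hj₁⟩ := hcell i₁ a₂ ha₂A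
    have hj₁ne : j₁ ≠ j₀ := fun h => ha₂ (h ▸ hj₁)
    have ha₁A : a₁ ∈ A i₁ := (Finset.mem_filter.1 ha₁).1
    have hu : toR (cayleyE r j₀) - toR (cayleyE r j₁)
        ∈ Submodule.map (CayAux.realify φ) (Submodule.span ℝ (CayAux.dset (SL i₁))) := by
      refine ⟨toR (Fin.append a₁ (cayleyE k i₁)) - toR (Fin.append a₂ (cayleyE k i₁)),
        Submodule.subset_span ⟨_, Finset.mem_image_of_mem _ ha₁A, _,
          Finset.mem_image_of_mem _ ha₂A, rfl⟩, ?_⟩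
      rw [hQd]
      rw [(Finset.mem_filter.1 ha₁).2, (Finset.mem_filter.1 hj₁).2]
    rw [hUA i₁, ← hUA i₀, Submodule.map_span] at hu
    -- all generators of this span avoid the fiber j₀
    have hgen : ∀ v ∈ (CayAux.realify φ) '' (CayAux.dset (SL i₀)),
        ∃ j j', j ≠ j₀ ∧ j' ≠ j₀ ∧ v = toR (cayleyE r j) - toR (cayleyE r j') := by
      rintro v ⟨w, ⟨x, hx, y, hy, rfl⟩, rfl⟩
      rw [hmemSL] at hx hy
      obtain ⟨a, ha, rfl⟩ := hx
      obtain ⟨a', ha', rfl⟩ := hy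
      obtain ⟨ja, hja⟩ := hcell i₀ a ha
      obtain ⟨jb, hjb⟩ := hcell i₀ a' ha'
      have hjane : ja ≠ j₀ := fun h => hne a (h ▸ hja)
      have hjbne : jb ≠ j₀ := fun h => hne a' (h ▸ hjb)
      refine ⟨ja, jb, hjane, hjbne, ?_⟩
      rw [hQd]
      rw [(Finset.mem_filter.1 hja).2, (Finset.mem_filter.1 hjb).2]
    rcases Fin.eq_zero_or_eq_succ j₀ with rfl | ⟨t₀, rfl⟩
    · -- j₀ = 0 : use the sum-of-coordinates functional
      set lam : (Fin r → ℝ) →ₗ[ℝ] ℝ := ∑ t : Fin r, LinearMap.proj t with hlam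
      have hlamv : ∀ w : Fin r → ℝ, lam w = ∑ t : Fin r, w t := by
        intro w
        rw [hlam]
        simp [LinearMap.sum_apply]
      have hlam0 : Submodule.span ℝ ((CayAux.realify φ) '' (CayAux.dset (SL i₀)))
          ≤ LinearMap.ker lam := by
        rw [Submodule.span_le]
        intro v hv
        obtain ⟨j, j', hj, hj', rfl⟩ := hgen v hv
        simp only [SetLike.mem_coe, LinearMap.mem_ker, map_sub]
        rw [hlamv, hlamv, CayAux.sum_toR_cayleyE j hj, CayAux.sum_toR_cayleyE j' hj']
        ring
      have := hlam0 hu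
      simp only [SetLike.mem_coe, LinearMap.mem_ker, map_sub] at this
      rw [hlamv, hlamv, CayAux.sum_toR_cayleyE j₁ hj₁ne] at this
      have hz : ∑ t : Fin r, toR (cayleyE r 0) t = 0 := by
        rw [CayAux.cayleyE_zero, CayAux.toR_zero]
        simp
      rw [hz] at this
      norm_num at this
    · -- j₀ = t₀.succ : use the coordinate functional at t₀
      have hcoord : ∀ (j : Fin (r + 1)), j ≠ t₀.succ → toR (cayleyE r j) t₀ = 0 := by
        intro j hj
        simp only [toR, cayleyE]
        rw [if_neg ?_]
        · norm_num
        · intro hc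
          apply hj
          apply Fin.ext
          rw [Fin.val_succ]
          omega
      have hlam0 : Submodule.span ℝ ((CayAux.realify φ) '' (CayAux.dset (SL i₀)))
          ≤ LinearMap.ker (LinearMap.proj t₀ : (Fin r → ℝ) →ₗ[ℝ] ℝ) := by
        rw [Submodule.span_le]
        intro v hv
        obtain ⟨j, j', hj, hj', rfl⟩ := hgen v hv
        simp only [SetLike.mem_coe, LinearMap.mem_ker, map_sub, LinearMap.proj_apply,
          Pi.sub_apply]
        rw [hcoord j hj, hcoord j' hj']
        ring
      have := hlam0 hu
      simp only [SetLike.mem_coe, LinearMap.mem_ker, map_sub, LinearMap.proj_apply,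
        Pi.sub_apply] at this
      rw [hcoord j₁ hj₁ne] at this
      have h1 : toR (cayleyE r t₀.succ) t₀ = 1 := by
        simp [toR, cayleyE, Fin.val_succ]
      rw [h1] at this
      norm_num at this
  -- the projection of each W_j to the simplex directions is everything
  have hPAtop : ∀ j, Submodule.map PA (WJ j) = ⊤ := by
    intro j
    rw [eq_top_iff]
    intro v _
    have hs : ∀ t : Fin k, (Pi.single t 1 : Fin k → ℝ) ∈ Submodule.map PA (WJ j) := by
      intro t
      obtain ⟨a, ha⟩ := hcells j t.succ
      obtain ⟨a', ha'⟩ := hcells j 0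
      refine ⟨toR (Fin.append a (cayleyE k t.succ)) - toR (Fin.append a' (cayleyE k 0)),
        Submodule.subset_span ⟨_, hFcG _ _ _ ha, _, hFcG _ _ _ ha', rfl⟩, ?_⟩
      rw [map_sub, hPAappend, hPAappend, CayAux.toR_cayleyE_succ, CayAux.cayleyE_zero,
        CayAux.toR_zero, sub_zero]
    have hv : v = ∑ t, v t • (Pi.single t 1 : Fin k → ℝ) := (CayAux.sum_smul_single v).symm
    rw [hv]
    exact Submodule.sum_mem _ (fun t _ => Submodule.smul_mem _ _ (hs t))
  have hWJdecomp : ∀ j, confDim (B j)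
      = Module.finrank ℝ (WJ j ⊓ KA : Submodule ℝ (Fin (n + k) → ℝ)) + k := by
    intro j
    rw [← hWJrank j, CayAux.finrank_eq_inf_add_map PA (WJ j), hPAtop j, finrank_top,
      Module.finrank_fintype_fun_eq_card, Fintype.card_fin]
  -- lower bound for the sum of intersection ranks
  have hsum : n ≤ (∑ j, Module.finrank ℝ (WJ j ⊓ KA : Submodule ℝ (Fin (n + k) → ℝ))) + r := by
    choose w hw using fun j => hcells j 0
    set cj : Fin (r + 1) → (Fin (n + k) → ℝ) :=
      fun j => toR (Fin.append (w j) (cayleyE k 0)) with hcj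
    set CS := Submodule.span ℝ (Set.range (fun t : Fin r => cj t.succ - cj 0)) with hCS
    set S := (⨆ j, (WJ j ⊓ KA)) ⊔ CS with hS
    have hcjG : ∀ j, Fin.append (w j) (cayleyE k 0) ∈ Gj j := fun j => hFcG _ _ _ (hw j)
    have hcross : ∀ j : Fin (r + 1), cj j - cj 0 ∈ S := by
      intro j
      rcases Fin.eq_zero_or_eq_succ j with rfl | ⟨t, rfl⟩
      · simp
      · exact le_sup_right (a := ⨆ j, (WJ j ⊓ KA)) (Submodule.subset_span ⟨t, rfl⟩)
    have hinS : ∀ (a : ZLat n) (j : Fin (r + 1)), a ∈ Fc j 0 →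
        toR (Fin.append a (cayleyE k 0)) - cj j ∈ S := by
      intro a j haj
      have h1 : toR (Fin.append a (cayleyE k 0)) - cj j ∈ WJ j ⊓ KA := by
        refine Submodule.mem_inf.mpr ⟨Submodule.subset_span ⟨_, hFcG _ _ _ haj, _, hcjG j, rfl⟩, ?_⟩
        have h0 : PA (toR (Fin.append a (cayleyE k 0)) - cj j) = 0 := by
          rw [hcj]
          simp only [map_sub, hPAappend, sub_self]
        exact LinearMap.mem_ker.mpr h0
      exact le_sup_left (b := CS) (le_iSup (fun j => WJ j ⊓ KA) j h1)
    have hSL0 : Submodule.span ℝ (CayAux.dset (SL 0)) ≤ S := by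
      rw [Submodule.span_le]
      rintro v ⟨x, hx, y, hy, rfl⟩
      rw [hmemSL] at hx hy
      obtain ⟨a, ha, rfl⟩ := hx
      obtain ⟨a', ha', rfl⟩ := hy
      obtain ⟨ja, hja⟩ := hcell 0 a ha
      obtain ⟨jb, hjb⟩ := hcell 0 a' ha'
      have hv : toR (Fin.append a (cayleyE k 0)) - toR (Fin.append a' (cayleyE k 0))
          = (toR (Fin.append a (cayleyE k 0)) - cj ja)
            - (toR (Fin.append a' (cayleyE k 0)) - cj jb)
            + (cj ja - cj 0) - (cj jb - cj 0) := by
        abel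
      rw [hv]
      exact Submodule.sub_mem _ (Submodule.add_mem _
        (Submodule.sub_mem _ (hinS a ja hja) (hinS a' jb hjb)) (hcross ja)) (hcross jb)
    have hKS : KA ≤ S := by rw [← hUA 0]; exact hSL0
    have hrankS : n ≤ Module.finrank ℝ S := by
      have h := Submodule.finrank_mono hKS
      rwa [hKArank] at h
    have hCSr : Module.finrank ℝ CS ≤ r := by
      have h := finrank_range_le_card (R := ℝ) (fun t : Fin r => cj t.succ - cj 0)
      rw [Fintype.card_fin] at h
      exact h
    have hiSup := CayAux.finrank_iSup_fin_le (r + 1) (fun j => WJ j ⊓ KA)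
    have hsup := CayAux.finrank_sup_le (⨆ j, (WJ j ⊓ KA)) CS
    rw [← hS] at hsup
    omega
  -- final assembly
  have hfinal : ∀ j, (confDim (B j) : ℤ)
      = (Module.finrank ℝ (WJ j ⊓ KA : Submodule ℝ (Fin (n + k) → ℝ)) : ℤ) + k := by
    intro j
    exact_mod_cast congrArg (Nat.cast : ℕ → ℤ) (hWJdecomp j)
  have hsum' : (n : ℤ) ≤ (∑ j, (Module.finrank ℝ (WJ j ⊓ KA : Submodule ℝ (Fin (n + k) → ℝ)) : ℤ)) + r := by
    exact_mod_cast hsum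
  have heq : ∑ j, (confDim (B j) : ℤ)
      = (∑ j, (Module.finrank ℝ (WJ j ⊓ KA : Submodule ℝ (Fin (n + k) → ℝ)) : ℤ)) + (r + 1) * k := by
    rw [Finset.sum_congr rfl (fun j _ => hfinal j), Finset.sum_add_distrib]
    congr 1
    rw [Finset.sum_const, Finset.card_univ, Fintype.card_fin]
    ring
  rw [heq]
  linarith
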